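/- For every natural number m, the integral from 0 to ∞ of 1/(z²+1)^(m+1) dz equals (π/2^(2m+1))·C(2m, m). -/

import Mathlib

open Real Set MeasureTheory intervalIntegral Finset

lemma cos_pow_int (m : ℕ) :
    ∫ x in (0:ℝ)..(π/2), Real.cos x ^ (2 * m)
      = π / 2 * ∏ i ∈ Finset.range m, (2 * (i : ℝ) + 1) / (2 * i + 2) := by
  induction m with
  | zero => simp
  | succ k ih =>
    rw [Finset.prod_range_succ_comm, mul_left_comm, ← ih, Nat.mul_succ, integral_cos_pow]
    simp [Real.cos_pi_div_two]

lemma prod_eq_choose (m : ℕ) :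
    (∏ i ∈ Finset.range m, (2 * (i : ℝ) + 1) / (2 * i + 2))
      = (Nat.choose (2 * m) m : ℝ) / 4 ^ m := by
  induction m with
  | zero => simp
  | succ k ih =>
    rw [Finset.prod_range_succ, ih]
    have h := Nat.succ_mul_centralBinom_succ k
    have h' : ((k : ℝ) + 1) * Nat.choose (2 * (k + 1)) (k + 1)
        = 2 * (2 * k + 1) * Nat.choose (2 * k) k := by
      have := congrArg (fun n : ℕ => (n : ℝ)) h
      simpa [Nat.centralBinom] using this
    have hk : ((k : ℝ) + 1) ≠ 0 := by positivity
    field_simp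
    linear_combination (-2 * 4 ^ k : ℝ) * h'

lemma image_tan_Ioo_pos : Real.tan '' Set.Ioo 0 (π/2) = Set.Ioi (0:ℝ) := by
  ext z
  constructor
  · rintro ⟨x, ⟨hx0, hx1⟩, rfl⟩
    exact Real.tan_pos_of_pos_of_lt_pi_div_two hx0 hx1
  · intro hz
    refine ⟨Real.arctan z, ⟨?_, Real.arctan_lt_pi_div_two z⟩, Real.tan_arctan z⟩
    rw [← Real.arctan_zero]
    exact Real.arctan_strictMono hz

theorem wallis_formula (m : ℕ) :
    ∫ z in Set.Ioi (0 : ℝ), 1 / (z ^ 2 + 1) ^ (m + 1)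
      = Real.pi / 2 ^ (2 * m + 1) * Nat.choose (2 * m) m := by
  have hmeas : MeasurableSet (Set.Ioo (0:ℝ) (π/2)) := measurableSet_Ioo
  have hcos : ∀ x ∈ Set.Ioo (0:ℝ) (π/2), 0 < Real.cos x := fun x hx =>
    Real.cos_pos_of_mem_Ioo ⟨by linarith [hx.1, Real.pi_pos], hx.2⟩
  have hderiv : ∀ x ∈ Set.Ioo (0:ℝ) (π/2),
      HasDerivWithinAt Real.tan (1 / Real.cos x ^ 2) (Set.Ioo (0:ℝ) (π/2)) x := fun x hx =>
    (Real.hasDerivAt_tan (hcos x hx).ne').hasDerivWithinAt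
  have hinj : Set.InjOn Real.tan (Set.Ioo (0:ℝ) (π/2)) := by
    apply Real.injOn_tan.mono
    intro x hx
    exact ⟨by linarith [hx.1, Real.pi_pos], hx.2⟩
  have key := integral_image_eq_integral_abs_deriv_smul hmeas hderiv hinj
    (fun z : ℝ => 1 / (z ^ 2 + 1) ^ (m + 1))
  rw [image_tan_Ioo_pos] at key
  rw [key]
  have hcongr : ∀ x ∈ Set.Ioo (0:ℝ) (π/2),
      |1 / Real.cos x ^ 2| • (1 / (Real.tan x ^ 2 + 1) ^ (m + 1)) = Real.cos x ^ (2 * m) := by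
    intro x hx
    have hc := hcos x hx
    have h1 : (1 + Real.tan x ^ 2)⁻¹ = Real.cos x ^ 2 := Real.inv_one_add_tan_sq hc.ne'
    have h2 : Real.tan x ^ 2 + 1 = (Real.cos x ^ 2)⁻¹ := by
      rw [← h1, add_comm, inv_inv]
    rw [smul_eq_mul, h2, abs_of_pos (by positivity)]
    field_simp
    rw [one_div_pow, ← pow_mul, mul_add, mul_one, pow_add]
    field_simp
  rw [setIntegral_congr_fun hmeas hcongr]
  rw [← integral_Ioc_eq_integral_Ioo, ← intervalIntegral.integral_of_le (by positivity)]
  rw [cos_pow_int, prod_eq_choose]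
  rw [pow_succ, pow_mul]
  norm_num
  ring
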